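/- There is a constant C > 0 such that for all t > 0 and all y ∈ ℝ, ∫₀^∞ |v − y|^{−1/2} · v^{−1/4} · e^{−t v³} dv ≤ C · t^{−1/12}. -/

import Mathlib

open Real MeasureTheory Set

/-- There is `C > 0` such that for all `t > 0` and all `y ∈ ℝ`,
`∫₀^∞ |v − y|^{−1/2} v^{−1/4} e^{−tv³} dv ≤ C · t^{−1/12}`. -/
theorem dbar_vertical_integral_bound :
    ∃ C > (0:ℝ), ∀ t : ℝ, 0 < t → ∀ y : ℝ,
      (∫ v in Set.Ioi (0:ℝ),
          |v - y| ^ (-(1:ℝ)/2) * v ^ (-(1:ℝ)/4) * Real.exp (-t * v^3))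
        ≤ C * t ^ (-(1:ℝ)/12) := by
  refine ⟨8 + Real.Gamma (1/3 + 1) + 1/3 * Real.Gamma (1/12), ?_, ?_⟩
  · have h1 := Real.Gamma_pos_of_pos (show (0:ℝ) < 1/3 + 1 by norm_num)
    have h2 := Real.Gamma_pos_of_pos (show (0:ℝ) < 1/12 by norm_num)
    linarith
  intro t ht y
  set T : ℝ := t ^ (-(1:ℝ)/12) with hTdef
  set R : ℝ := t ^ (-(1:ℝ)/3) with hRdef
  have hR : 0 < R := Real.rpow_pos_of_pos ht _
  set G : ℝ → ℝ := Set.indicator (Set.Icc (0:ℝ) R) (fun x => x ^ (-(3:ℝ)/4)) with hGdef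
  set g1 : ℝ → ℝ := fun v => G |v - y| with hg1def
  set g2 : ℝ → ℝ := fun v => R ^ (-(3:ℝ)/4) * Real.exp (-t * v ^ 3) with hg2def
  set g3 : ℝ → ℝ := fun v => v ^ (-(3:ℝ)/4) * Real.exp (-t * v ^ 3) with hg3def
  have hGnonneg : ∀ u : ℝ, 0 ≤ G u := fun u =>
    Set.indicator_nonneg (fun x hx => Real.rpow_nonneg hx.1 _) u
  -- integrability pieces
  have hIccPos : IntegrableOn (fun x : ℝ => x ^ (-(3:ℝ)/4)) (Icc 0 R) :=
    (intervalIntegrable_iff_integrableOn_Icc_of_le hR.le).mp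
      (intervalIntegral.intervalIntegrable_rpow' (by norm_num))
  have habsPos : IntegrableOn (fun u : ℝ => |u| ^ (-(3:ℝ)/4)) (Icc 0 R) :=
    hIccPos.congr_fun (fun x hx => by rw [abs_of_nonneg hx.1]) measurableSet_Icc
  have habsNeg : IntegrableOn (fun u : ℝ => |u| ^ (-(3:ℝ)/4)) (Icc (-R) 0) := by
    have m : MeasurableEmbedding (fun x : ℝ => -x) := (Homeomorph.neg ℝ).measurableEmbedding
    rw [IntegrableOn, ← Measure.map_neg_eq_self (volume : Measure ℝ), ← IntegrableOn]
    rw [m.integrableOn_map_iff]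
    have hset : ((fun x : ℝ => -x) ⁻¹' Icc (-R) 0) = Icc 0 R := by
      ext x
      simp only [Set.mem_preimage, Set.mem_Icc]
      constructor
      · rintro ⟨h1, h2⟩; exact ⟨by linarith, by linarith⟩
      · rintro ⟨h1, h2⟩; exact ⟨by linarith, by linarith⟩
    rw [hset]
    refine habsPos.congr_fun (fun x _ => ?_) measurableSet_Icc
    simp [Function.comp, abs_neg]
  have habsIcc : IntegrableOn (fun u : ℝ => |u| ^ (-(3:ℝ)/4)) (Icc (-R) R) := by
    refine (habsNeg.union habsPos).mono_set ?_
    intro x hx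
    rcases le_or_gt x 0 with h | h
    · exact Or.inl ⟨hx.1, h⟩
    · exact Or.inr ⟨h.le, hx.2⟩
  have habs : (fun u : ℝ => G |u|) =
      Set.indicator (Set.Icc (-R) R) (fun u => |u| ^ (-(3:ℝ)/4)) := by
    funext u
    by_cases h : |u| ≤ R
    · rw [hGdef]
      rw [Set.indicator_of_mem (show |u| ∈ Icc (0:ℝ) R from ⟨abs_nonneg u, h⟩),
        Set.indicator_of_mem (show u ∈ Icc (-R) R from ⟨(abs_le.mp h).1, (abs_le.mp h).2⟩)]
    · rw [hGdef]
      rw [Set.indicator_of_notMem (fun hm => h hm.2),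
        Set.indicator_of_notMem (fun hm => h (abs_le.mpr ⟨hm.1, hm.2⟩))]
  have hHint : Integrable (fun u : ℝ => G |u|) := by
    rw [habs]
    exact habsIcc.integrable_indicator measurableSet_Icc
  have hg1int : Integrable g1 := hHint.comp_sub_right y
  have h3pow : ∀ x : ℝ, x ^ (3:ℝ) = x ^ (3:ℕ) := fun x => by
    rw [← Real.rpow_natCast x 3]; norm_num
  have hexp : IntegrableOn (fun v : ℝ => Real.exp (-t * v ^ 3)) (Ioi 0) := by
    have h0 := integrableOn_rpow_mul_exp_neg_mul_rpow
      (show (-1:ℝ) < 0 by norm_num) (show (0:ℝ) < 3 by norm_num) ht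
    refine h0.congr_fun (fun x hx => ?_) measurableSet_Ioi
    dsimp only; rw [Real.rpow_zero, one_mul, h3pow x]
  have hg3int : IntegrableOn g3 (Ioi 0) := by
    have h0 := integrableOn_rpow_mul_exp_neg_mul_rpow
      (show (-1:ℝ) < -(3:ℝ)/4 by norm_num) (show (0:ℝ) < 3 by norm_num) ht
    refine h0.congr_fun (fun x hx => ?_) measurableSet_Ioi
    dsimp only; rw [h3pow x]
  have hg2int : IntegrableOn g2 (Ioi 0) := hexp.const_mul _
  -- pointwise bound
  have hptwise : ∀ v ∈ Ioi (0:ℝ),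
      |v - y| ^ (-(1:ℝ)/2) * v ^ (-(1:ℝ)/4) * Real.exp (-t * v ^ 3)
        ≤ g1 v + g2 v + g3 v := by
    intro v hv
    rw [Set.mem_Ioi] at hv
    have hE0 : 0 < Real.exp (-t * v ^ 3) := Real.exp_pos _
    have hE1 : Real.exp (-t * v ^ 3) ≤ 1 := by
      rw [Real.exp_le_one_iff]
      have : 0 < v ^ 3 := by positivity
      nlinarith
    have hg1nn : 0 ≤ g1 v := hGnonneg _
    have hg2nn : 0 ≤ g2 v := by positivity
    have hg3nn : 0 ≤ g3 v := by positivity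
    set a : ℝ := |v - y| with hadef
    have ha0 : 0 ≤ a := abs_nonneg _
    rcases le_or_gt v a with hva | hav
    · -- f ≤ g3
      have h1 : a ^ (-(1:ℝ)/2) ≤ v ^ (-(1:ℝ)/2) :=
        Real.rpow_le_rpow_of_nonpos hv hva (by norm_num)
      have h2 : a ^ (-(1:ℝ)/2) * v ^ (-(1:ℝ)/4) ≤ v ^ (-(3:ℝ)/4) := by
        calc a ^ (-(1:ℝ)/2) * v ^ (-(1:ℝ)/4)
            ≤ v ^ (-(1:ℝ)/2) * v ^ (-(1:ℝ)/4) := by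
              have : (0:ℝ) ≤ v ^ (-(1:ℝ)/4) := Real.rpow_nonneg hv.le _
              exact mul_le_mul_of_nonneg_right h1 this
          _ = v ^ (-(3:ℝ)/4) := by
              rw [← Real.rpow_add hv]; norm_num
      have : a ^ (-(1:ℝ)/2) * v ^ (-(1:ℝ)/4) * Real.exp (-t * v ^ 3) ≤ g3 v :=
        mul_le_mul_of_nonneg_right h2 hE0.le
      linarith
    · rcases eq_or_lt_of_le ha0 with ha | ha
      · -- a = 0, the integrand is 0
        rw [← ha, Real.zero_rpow (by norm_num), zero_mul, zero_mul]
        positivity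
      · have h2 : a ^ (-(1:ℝ)/2) * v ^ (-(1:ℝ)/4) ≤ a ^ (-(3:ℝ)/4) := by
          calc a ^ (-(1:ℝ)/2) * v ^ (-(1:ℝ)/4)
              ≤ a ^ (-(1:ℝ)/2) * a ^ (-(1:ℝ)/4) := by
                have h1 : v ^ (-(1:ℝ)/4) ≤ a ^ (-(1:ℝ)/4) :=
                  Real.rpow_le_rpow_of_nonpos ha hav.le (by norm_num)
                have : (0:ℝ) ≤ a ^ (-(1:ℝ)/2) := Real.rpow_nonneg ha0 _
                exact mul_le_mul_of_nonneg_left h1 this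
            _ = a ^ (-(3:ℝ)/4) := by
                rw [← Real.rpow_add ha]; norm_num
        rcases le_or_gt a R with haR | haR
        · -- f ≤ g1
          have hg1v : g1 v = a ^ (-(3:ℝ)/4) := by
            rw [hg1def]
            exact Set.indicator_of_mem (show a ∈ Icc (0:ℝ) R from ⟨ha0, haR⟩) _
          have : a ^ (-(1:ℝ)/2) * v ^ (-(1:ℝ)/4) * Real.exp (-t * v ^ 3)
              ≤ a ^ (-(3:ℝ)/4) * 1 := by
            refine mul_le_mul h2 hE1 hE0.le (Real.rpow_nonneg ha0 _)
          rw [mul_one] at this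
          rw [← hg1v] at this
          linarith
        · -- f ≤ g2
          have h3 : a ^ (-(3:ℝ)/4) ≤ R ^ (-(3:ℝ)/4) :=
            Real.rpow_le_rpow_of_nonpos hR haR.le (by norm_num)
          have : a ^ (-(1:ℝ)/2) * v ^ (-(1:ℝ)/4) * Real.exp (-t * v ^ 3) ≤ g2 v :=
            mul_le_mul_of_nonneg_right (h2.trans h3) hE0.le
          linarith
  -- main estimate
  have hmono : (∫ v in Ioi (0:ℝ),
      |v - y| ^ (-(1:ℝ)/2) * v ^ (-(1:ℝ)/4) * Real.exp (-t * v ^ 3))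
      ≤ ∫ v in Ioi (0:ℝ), (g1 v + g2 v + g3 v) := by
    have hg123 : IntegrableOn (fun v => g1 v + g2 v + g3 v) (Ioi 0) :=
      ((hg1int.integrableOn.add hg2int).add hg3int : _)
    refine integral_mono_of_nonneg ?_ hg123 ?_
    · refine (ae_restrict_iff' measurableSet_Ioi).mpr (Filter.Eventually.of_forall fun v hv => ?_)
      rw [Set.mem_Ioi] at hv
      positivity
    · exact (ae_restrict_iff' measurableSet_Ioi).mpr
        (Filter.Eventually.of_forall fun v hv => hptwise v hv)
  have hsplit : (∫ v in Ioi (0:ℝ), (g1 v + g2 v + g3 v))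
      = (∫ v in Ioi (0:ℝ), g1 v) + (∫ v in Ioi (0:ℝ), g2 v) + (∫ v in Ioi (0:ℝ), g3 v) := by
    have hg12 : IntegrableOn (fun v => g1 v + g2 v) (Ioi 0) :=
      (hg1int.integrableOn.add hg2int : _)
    rw [integral_add hg12 hg3int, integral_add hg1int.integrableOn hg2int]
  -- integral of g1
  have hI1 : (∫ v in Ioi (0:ℝ), g1 v) ≤ 8 * T := by
    have step1 : (∫ v in Ioi (0:ℝ), g1 v) ≤ ∫ v, g1 v :=
      setIntegral_le_integral hg1int
        (Filter.Eventually.of_forall fun v => hGnonneg _)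
    have step2 : (∫ v, g1 v) = ∫ u, G |u| :=
      integral_sub_right_eq_self (fun u => G |u|) y
    have step3 : (∫ u, G |u|) = 2 * ∫ x in Ioi (0:ℝ), G x := integral_comp_abs
    have step4 : (∫ x in Ioi (0:ℝ), G x) = ∫ x in Ioc (0:ℝ) R, x ^ (-(3:ℝ)/4) := by
      rw [hGdef, setIntegral_indicator measurableSet_Icc,
        show Ioi (0:ℝ) ∩ Icc 0 R = Ioc 0 R from by
          ext x
          simp only [Set.mem_inter_iff, Set.mem_Ioi, Set.mem_Icc, Set.mem_Ioc]
          constructor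
          · rintro ⟨h1, _, h3⟩; exact ⟨h1, h3⟩
          · rintro ⟨h1, h2⟩; exact ⟨h1, h1.le, h2⟩]
    have step5 : (∫ x in Ioc (0:ℝ) R, x ^ (-(3:ℝ)/4)) = 4 * R ^ ((1:ℝ)/4) := by
      rw [← intervalIntegral.integral_of_le hR.le, integral_rpow (Or.inl (by norm_num)),
        Real.zero_rpow (by norm_num), sub_zero, show -(3:ℝ)/4 + 1 = 1/4 by norm_num]
      ring
    have hRT : R ^ ((1:ℝ)/4) = T := by
      rw [hRdef, hTdef, ← Real.rpow_mul ht.le]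
      congr 1
      norm_num
    calc (∫ v in Ioi (0:ℝ), g1 v) ≤ ∫ v, g1 v := step1
      _ = 2 * (4 * R ^ ((1:ℝ)/4)) := by rw [step2, step3, step4, step5]
      _ = 8 * T := by rw [hRT]; ring
  -- integral of g2
  have hI2 : (∫ v in Ioi (0:ℝ), g2 v) = Real.Gamma (1/3 + 1) * T := by
    rw [hg2def]
    rw [integral_const_mul]
    have hexpval : (∫ v in Ioi (0:ℝ), Real.exp (-t * v ^ 3))
        = t ^ (-1/(3:ℝ)) * Real.Gamma (1/3 + 1) := by
      rw [show (∫ v in Ioi (0:ℝ), Real.exp (-t * v ^ 3))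
          = ∫ v in Ioi (0:ℝ), Real.exp (-t * v ^ (3:ℝ)) from
        setIntegral_congr_fun measurableSet_Ioi (fun x hx => by rw [h3pow x])]
      rw [integral_exp_neg_mul_rpow (by norm_num) ht]
    rw [hexpval, hRdef, hTdef, ← Real.rpow_mul ht.le, ← mul_assoc, ← Real.rpow_add ht]
    rw [show -(1:ℝ)/3 * (-(3)/4) + -1/3 = -(1:ℝ)/12 by norm_num]
    ring
  -- integral of g3
  have hI3 : (∫ v in Ioi (0:ℝ), g3 v) = 1/3 * Real.Gamma (1/12) * T := by
    rw [hg3def]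
    rw [show (∫ v in Ioi (0:ℝ), v ^ (-(3:ℝ)/4) * Real.exp (-t * v ^ 3))
        = ∫ v in Ioi (0:ℝ), v ^ (-(3:ℝ)/4) * Real.exp (-t * v ^ (3:ℝ)) from
      setIntegral_congr_fun measurableSet_Ioi (fun x hx => by rw [h3pow x])]
    rw [integral_rpow_mul_exp_neg_mul_rpow (by norm_num) (by norm_num) ht]
    rw [hTdef, show -(-(3:ℝ)/4 + 1)/3 = -(1:ℝ)/12 by norm_num,
      show (-(3:ℝ)/4 + 1)/3 = 1/12 by norm_num]
    ring
  calc (∫ v in Ioi (0:ℝ),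
      |v - y| ^ (-(1:ℝ)/2) * v ^ (-(1:ℝ)/4) * Real.exp (-t * v ^ 3))
      ≤ (∫ v in Ioi (0:ℝ), g1 v) + (∫ v in Ioi (0:ℝ), g2 v) + (∫ v in Ioi (0:ℝ), g3 v) := by
        rw [← hsplit]; exact hmono
    _ ≤ 8 * T + Real.Gamma (1/3 + 1) * T + 1/3 * Real.Gamma (1/12) * T := by
        rw [hI2, hI3]; linarith
    _ = (8 + Real.Gamma (1/3 + 1) + 1/3 * Real.Gamma (1/12)) * T := by ring
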